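/- Let A be a positive bounded self-adjoint operator on a right quaternionic Hilbert space. Then the S-spectrum of A is contained in the real interval [m(A), M(A)], where m(A) = inf_{‖φ‖=1}⟨Aφ,φ⟩ and M(A) = sup_{‖φ‖=1}⟨Aφ,φ⟩. -/

import Mathlib

noncomputable section

open MulOpposite

abbrev Quat := Quaternion ℝ

class RQH (V : Type*) [NormedAddCommGroup V] [Module Quatᵐᵒᵖ V] where
  inn : V → V → Quat
  conj_symm : ∀ φ ψ : V, star (inn φ ψ) = inn ψ φ
  add_right : ∀ φ ψ ω : V, inn φ (ψ + ω) = inn φ ψ + inn φ ω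
  smul_right : ∀ (φ ψ : V) (q : Quat), inn φ (op q • ψ) = inn φ ψ * q
  norm_sq : ∀ φ : V, inn φ φ = ((‖φ‖ ^ 2 : ℝ) : Quat)

open RQH

variable {V : Type*} [NormedAddCommGroup V] [Module Quatᵐᵒᵖ V] [CompleteSpace V] [RQH V]

def IsBddRL (A : V → V) : Prop :=
  (∀ x y : V, A (x + y) = A x + A y) ∧
  (∀ (q : Quatᵐᵒᵖ) (x : V), A (q • x) = q • A x) ∧
  (∃ C : ℝ, ∀ x : V, ‖A x‖ ≤ C * ‖x‖)

def IsSA (A : V → V) : Prop := ∀ φ ψ : V, inn (A φ) ψ = inn φ (A ψ)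

def IsPos (A : V → V) : Prop := ∀ φ : V, ∃ r : ℝ, 0 ≤ r ∧ inn (A φ) φ = (r : Quat)

def opN (A : V → V) : ℝ := sSup { r : ℝ | ∃ φ : V, ‖φ‖ = 1 ∧ r = ‖A φ‖ }

def mA (A : V → V) : ℝ := sInf { r : ℝ | ∃ φ : V, ‖φ‖ = 1 ∧ r = (inn (A φ) φ).re }

def MA (A : V → V) : ℝ := sSup { r : ℝ | ∃ φ : V, ‖φ‖ = 1 ∧ r = (inn (A φ) φ).re }

def Rq (A : V → V) (l : Quat) (ψ : V) : V :=
  A (A ψ) - op ((2 * l.re : ℝ) : Quat) • A ψ + op ((‖l‖ ^ 2 : ℝ) : Quat) • ψ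

def SInv (T : V → V) : Prop :=
  ∃ B : V → V, IsBddRL B ∧ (∀ x, T (B x) = x) ∧ (∀ x, B (T x) = x)

def sspec (A : V → V) : Set Quat := { l | ¬ SInv (Rq A l) }


set_option linter.unusedSectionVars false

lemma inn_add_left (φ ψ ω : V) : inn (φ + ψ) ω = inn φ ω + inn ψ ω := by
  rw [← conj_symm, add_right, star_add, conj_symm, conj_symm]

lemma inn_smul_left (φ ψ : V) (q : Quat) : inn (op q • φ) ψ = star q * inn φ ψ := by
  rw [← conj_symm, smul_right, star_mul, conj_symm]

lemma inn_zero_right (φ : V) : inn φ (0 : V) = 0 := by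
  have h := add_right φ (0 : V) (0 : V)
  simpa using h.symm

lemma inn_zero_left (φ : V) : inn (0 : V) φ = 0 := by
  rw [← conj_symm, inn_zero_right, star_zero]

lemma inn_neg_right (φ ψ : V) : inn φ (-ψ) = - inn φ ψ := by
  have h := add_right φ ψ (-ψ)
  rw [add_neg_cancel, inn_zero_right] at h
  exact eq_neg_of_add_eq_zero_right h.symm

lemma inn_neg_left (φ ψ : V) : inn (-φ) ψ = - inn φ ψ := by
  rw [← conj_symm, inn_neg_right, star_neg, conj_symm]

lemma inn_sub_right (φ ψ ω : V) : inn φ (ψ - ω) = inn φ ψ - inn φ ω := by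
  rw [sub_eq_add_neg, add_right, inn_neg_right, sub_eq_add_neg]

lemma inn_sub_left (φ ψ ω : V) : inn (φ - ψ) ω = inn φ ω - inn ψ ω := by
  rw [sub_eq_add_neg, inn_add_left, inn_neg_left, sub_eq_add_neg]

lemma re_inn_comm (φ ψ : V) : (inn φ ψ).re = (inn ψ φ).re := by
  rw [← conj_symm φ ψ]; simp

lemma norm_sq_re (φ : V) : (inn φ φ).re = ‖φ‖ ^ 2 := by
  rw [norm_sq, Quaternion.re_coe]

lemma norm_op_smul (q : Quat) (φ : V) : ‖op q • φ‖ = ‖q‖ * ‖φ‖ := by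
  have h : inn (op q • φ) (op q • φ) = ((‖q‖ ^ 2 * ‖φ‖ ^ 2 : ℝ) : Quat) := by
    rw [smul_right, inn_smul_left, norm_sq]
    rw [mul_assoc, Quaternion.coe_commutes, ← mul_assoc, Quaternion.star_mul_self,
      Quaternion.normSq_eq_norm_mul_self]
    norm_cast
    ring
  rw [norm_sq] at h
  have h2 : ‖op q • φ‖ ^ 2 = ‖q‖ ^ 2 * ‖φ‖ ^ 2 := by
    exact_mod_cast congrArg QuaternionAlgebra.re h
  nlinarith [norm_nonneg (op q • φ), norm_nonneg q, norm_nonneg φ, mul_nonneg (norm_nonneg q) (norm_nonneg φ)]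

lemma quat_re_le_norm (q : Quat) : q.re ≤ ‖q‖ := by
  have h : q.re ^ 2 ≤ ‖q‖ * ‖q‖ := by
    rw [← Quaternion.normSq_eq_norm_mul_self, Quaternion.normSq_def']
    nlinarith [sq_nonneg q.imI, sq_nonneg q.imJ, sq_nonneg q.imK]
  nlinarith [norm_nonneg q, abs_le_abs (le_abs_self q.re)]

lemma cauchy_schwarz (φ ψ : V) : ‖inn φ ψ‖ ≤ ‖φ‖ * ‖ψ‖ := by
  rcases eq_or_ne ψ 0 with rfl | hψ
  · simp [inn_zero_right]
  · have hψ0 : 0 < ‖ψ‖ := norm_pos_iff.mpr hψ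
    set n : ℝ := ‖ψ‖ ^ 2 with hn
    have hn0 : 0 < n := by positivity
    set c : Quat := inn ψ φ * ((n⁻¹ : ℝ) : Quat) with hc
    have h1 : inn φ ψ * c = ((‖inn ψ φ‖ ^ 2 * n⁻¹ : ℝ) : Quat) := by
      rw [hc, ← mul_assoc, ← conj_symm ψ φ, Quaternion.star_mul_self,
        Quaternion.normSq_eq_norm_mul_self]
      push_cast
      norm_cast
      ring
    have h2 : star c * inn ψ φ = ((‖inn ψ φ‖ ^ 2 * n⁻¹ : ℝ) : Quat) := by
      rw [hc, star_mul, Quaternion.star_coe, mul_assoc, Quaternion.star_mul_self,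
        Quaternion.normSq_eq_norm_mul_self]
      push_cast
      norm_cast
      ring
    have hnc : ‖c‖ = ‖inn ψ φ‖ * n⁻¹ := by
      rw [hc, norm_mul, Quaternion.norm_coe, Real.norm_eq_abs, abs_of_pos (by positivity)]
    have h3 : star c * (((n : ℝ) : Quat) * c) = ((‖inn ψ φ‖ ^ 2 * n⁻¹ : ℝ) : Quat) := by
      rw [Quaternion.coe_commutes, ← mul_assoc, ← mul_assoc, h2]
      have hr : (‖inn ψ φ‖ ^ 2 * n⁻¹) * n⁻¹ * n = ‖inn ψ φ‖ ^ 2 * n⁻¹ := by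
        field_simp
      exact_mod_cast congrArg (fun r : ℝ => (r : Quat)) hr
    have key : inn (φ - op c • ψ) (φ - op c • ψ)
        = ((‖φ‖ ^ 2 - ‖inn ψ φ‖ ^ 2 * n⁻¹ : ℝ) : Quat) := by
      rw [inn_sub_left, inn_sub_right, inn_sub_right, smul_right, inn_smul_left,
        inn_smul_left, smul_right, norm_sq, norm_sq]
      rw [h1, h2, h3]
      push_cast
      abel
    have hre : 0 ≤ ‖φ‖ ^ 2 - ‖inn ψ φ‖ ^ 2 * n⁻¹ := by
      have := norm_sq_re (φ - op c • ψ)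
      rw [key, Quaternion.re_coe] at this
      rw [this]
      positivity
    have hsq : ‖inn ψ φ‖ ^ 2 ≤ (‖φ‖ * ‖ψ‖) ^ 2 := by
      have hle : ‖inn ψ φ‖ ^ 2 * n⁻¹ ≤ ‖φ‖ ^ 2 := by linarith
      calc ‖inn ψ φ‖ ^ 2 = ‖inn ψ φ‖ ^ 2 * n⁻¹ * n := by field_simp
        _ ≤ ‖φ‖ ^ 2 * n := by nlinarith
        _ = (‖φ‖ * ‖ψ‖) ^ 2 := by rw [hn]; ring
    have hnorm : ‖inn φ ψ‖ = ‖inn ψ φ‖ := by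
      rw [← conj_symm φ ψ, Quaternion.norm_star]
    rw [hnorm]
    nlinarith [norm_nonneg (inn ψ φ), mul_nonneg (norm_nonneg φ) (norm_nonneg ψ)]


lemma re_inn_le (φ ψ : V) : (inn φ ψ).re ≤ ‖φ‖ * ‖ψ‖ :=
  (quat_re_le_norm _).trans (cauchy_schwarz φ ψ)

lemma norm_sub_sq' (φ ψ : V) :
    ‖φ - ψ‖ ^ 2 = ‖φ‖ ^ 2 - 2 * (inn φ ψ).re + ‖ψ‖ ^ 2 := by
  have h : inn (φ - ψ) (φ - ψ) = inn φ φ - inn φ ψ - (inn ψ φ - inn ψ ψ) := by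
    rw [inn_sub_left, inn_sub_right, inn_sub_right]
  have := congrArg QuaternionAlgebra.re h
  rw [norm_sq_re] at this
  simp only [Quaternion.re_sub] at this
  rw [this, norm_sq_re, norm_sq_re, re_inn_comm ψ φ]
  ring

def realToQuatMop : ℝ →+* Quatᵐᵒᵖ where
  toFun r := op ((r : ℝ) : Quat)
  map_one' := by simp
  map_mul' r s := by
    simp only [← op_mul]
    push_cast
    rw [Quaternion.coe_commutes]
  map_zero' := by simp
  map_add' r s := by
    simp only [← op_add]
    push_cast
    rfl

instance (priority := 100) realModule : Module ℝ V := Module.compHom V realToQuatMop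

lemma real_smul_def (r : ℝ) (x : V) : r • x = op ((r : ℝ) : Quat) • x := rfl

instance (priority := 100) realNormedSpace : NormedSpace ℝ V where
  norm_smul_le r x := by
    rw [real_smul_def, norm_op_smul, Quaternion.norm_coe]

lemma sInv_of_coercive [CompleteSpace V] [Nontrivial V]
    (Q : V → V) (hQ : IsBddRL Q) (c : ℝ) (hc : 0 < c)
    (hco : ∀ φ : V, c * ‖φ‖ ^ 2 ≤ (inn (Q φ) φ).re) : SInv Q := by
  obtain ⟨hadd, hsmul, C₀, hC₀⟩ := hQ
  set C : ℝ := max C₀ 1 with hCdef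
  have hC1 : 1 ≤ C := le_max_right _ _
  have hCpos : 0 < C := lt_of_lt_of_le one_pos hC1
  have hC : ∀ x : V, ‖Q x‖ ≤ C * ‖x‖ := fun x =>
    (hC₀ x).trans (mul_le_mul_of_nonneg_right (le_max_left _ _) (norm_nonneg x))
  -- c ≤ C
  have hcC : c ≤ C := by
    obtain ⟨x, hx⟩ := exists_ne (0 : V)
    have hx0 : 0 < ‖x‖ := norm_pos_iff.mpr hx
    have h1 : c * ‖x‖ ^ 2 ≤ (inn (Q x) x).re := hco x
    have h2 : (inn (Q x) x).re ≤ ‖Q x‖ * ‖x‖ := re_inn_le _ _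
    have h3 : ‖Q x‖ * ‖x‖ ≤ C * ‖x‖ ^ 2 := by
      have := mul_le_mul_of_nonneg_right (hC x) (norm_nonneg x)
      nlinarith
    have h4 : c * ‖x‖ ^ 2 ≤ C * ‖x‖ ^ 2 := by linarith
    exact le_of_mul_le_mul_right h4 (by positivity : (0:ℝ) < ‖x‖ ^ 2)
  -- package Q as a continuous linear map
  let Qlin : V →ₗ[ℝ] V :=
    { toFun := Q
      map_add' := hadd
      map_smul' := fun r x => hsmul (op ((r : ℝ) : Quat)) x }
  let Qc : V →L[ℝ] V := Qlin.mkContinuousOfExistsBound ⟨C, hC⟩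
  have hQc : ∀ x : V, Qc x = Q x := fun x => rfl
  set t : ℝ := c / C ^ 2 with htdef
  have ht : 0 < t := by positivity
  set k : V →L[ℝ] V := 1 - t • Qc with hkdef
  set r : ℝ := Real.sqrt (1 - c ^ 2 / C ^ 2) with hrdef
  have hint : 0 ≤ 1 - c ^ 2 / C ^ 2 := by
    have : c ^ 2 ≤ C ^ 2 := by nlinarith
    have : c ^ 2 / C ^ 2 ≤ 1 := by
      rw [div_le_one (by positivity)]; exact this
    linarith
  have hrsq : r ^ 2 = 1 - c ^ 2 / C ^ 2 := Real.sq_sqrt hint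
  have hr0 : 0 ≤ r := Real.sqrt_nonneg _
  have hr1 : r < 1 := by
    nlinarith [div_pos (pow_pos hc 2) (pow_pos hCpos 2), sq_nonneg (r - 1)]
  have hkbound : ∀ x : V, ‖k x‖ ≤ r * ‖x‖ := by
    intro x
    have hkx : k x = x - t • Q x := by
      simp [hkdef, hQc, sub_eq_add_neg]
    have hre : (inn x ((t : ℝ) • Q x)).re = t * (inn (Q x) x).re := by
      rw [real_smul_def, smul_right]
      have : (inn x (Q x) * ((t : ℝ) : Quat)).re = (inn x (Q x)).re * t := by
        simp [Quaternion.re_mul]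
      rw [this, re_inn_comm x (Q x)]; ring
    have hnt : ‖(t : ℝ) • Q x‖ = t * ‖Q x‖ := by
      rw [norm_smul, Real.norm_eq_abs, abs_of_pos ht]
    have hsq : ‖k x‖ ^ 2 ≤ (1 - c ^ 2 / C ^ 2) * ‖x‖ ^ 2 := by
      rw [hkx, norm_sub_sq', hre, hnt]
      have h1 : c * ‖x‖ ^ 2 ≤ (inn (Q x) x).re := hco x
      have h2 : ‖Q x‖ ≤ C * ‖x‖ := hC x
      have h3 : ‖Q x‖ ^ 2 ≤ C ^ 2 * ‖x‖ ^ 2 := by nlinarith [norm_nonneg (Q x), norm_nonneg x]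
      have e1 : t * (c * ‖x‖ ^ 2) ≤ t * (inn (Q x) x).re :=
        mul_le_mul_of_nonneg_left h1 ht.le
      have e2 : t ^ 2 * ‖Q x‖ ^ 2 ≤ t ^ 2 * (C ^ 2 * ‖x‖ ^ 2) :=
        mul_le_mul_of_nonneg_left h3 (by positivity)
      have htC : t * C ^ 2 = c := by
        rw [htdef]; field_simp
      have e3 : t ^ 2 * (C ^ 2 * ‖x‖ ^ 2) = t * c * ‖x‖ ^ 2 := by
        calc t ^ 2 * (C ^ 2 * ‖x‖ ^ 2) = t * (t * C ^ 2) * ‖x‖ ^ 2 := by ring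
          _ = t * c * ‖x‖ ^ 2 := by rw [htC]
      have htc : t * c = c ^ 2 / C ^ 2 := by
        rw [htdef, div_mul_eq_mul_div, ← sq]
      rw [← htc]
      nlinarith [e1, e2, e3]
    nlinarith [norm_nonneg (k x), norm_nonneg x, mul_nonneg hr0 (norm_nonneg x)]
  have hknorm : ‖k‖ < 1 := by
    have := ContinuousLinearMap.opNorm_le_bound k hr0 hkbound
    linarith
  let u : (V →L[ℝ] V)ˣ := Units.oneSub k hknorm
  have huval : (u : V →L[ℝ] V) = t • Qc := by
    show 1 - k = t • Qc
    rw [hkdef]; abel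
  set w : V →L[ℝ] V := ((u⁻¹ : (V →L[ℝ] V)ˣ) : V →L[ℝ] V) with hwdef
  have hm1 : (u : V →L[ℝ] V) * w = 1 := u.mul_inv
  have hm2 : w * (u : V →L[ℝ] V) = 1 := u.inv_mul
  rw [huval] at hm1 hm2
  set Binv : V → V := fun x => t • (w x) with hBdef
  have hQB : ∀ x : V, Q (Binv x) = x := by
    intro x
    have hx := congrArg (fun f : V →L[ℝ] V => f x) hm1
    simp only [ContinuousLinearMap.mul_apply, ContinuousLinearMap.one_apply,
      ContinuousLinearMap.smul_apply] at hx
    have hQt : Q (t • (w x)) = t • Q (w x) := by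
      rw [real_smul_def, hsmul, real_smul_def]
    rw [hBdef]
    simp only []
    rw [hQt, ← hQc (w x)]
    exact hx
  have hBQ : ∀ x : V, Binv (Q x) = x := by
    intro x
    have hx := congrArg (fun f : V →L[ℝ] V => f x) hm2
    simp only [ContinuousLinearMap.mul_apply, ContinuousLinearMap.one_apply,
      ContinuousLinearMap.smul_apply] at hx
    rw [hBdef]
    simp only []
    rw [← map_smul]
    exact hx
  have hBadd : ∀ x y : V, Binv (x + y) = Binv x + Binv y := by
    intro x y
    rw [hBdef]
    simp only []
    rw [map_add, smul_add]
  have hBbd : ∀ x : V, ‖Binv x‖ ≤ (|t| * ‖w‖) * ‖x‖ := by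
    intro x
    rw [hBdef]
    simp only []
    rw [norm_smul, Real.norm_eq_abs, mul_assoc]
    exact mul_le_mul_of_nonneg_left (w.le_opNorm x) (abs_nonneg t)
  refine ⟨Binv, ⟨hBadd, ?_, ⟨|t| * ‖w‖, hBbd⟩⟩, hQB, hBQ⟩
  intro q x
  have h1 : q • x = Q (q • Binv x) := by rw [hsmul, hQB]
  rw [h1, hBQ]


lemma coe_mul_re (r : ℝ) (q : Quat) : (((r : ℝ) : Quat) * q).re = r * q.re := by
  simp [Quaternion.re_mul]

lemma mul_coe_re (r : ℝ) (q : Quat) : (q * ((r : ℝ) : Quat)).re = q.re * r := by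
  simp [Quaternion.re_mul]

lemma op_real_smul_comm (r : ℝ) (q : Quatᵐᵒᵖ) (x : V) :
    op ((r : ℝ) : Quat) • (q • x) = q • (op ((r : ℝ) : Quat) • x) := by
  rw [smul_smul, smul_smul]
  congr 1
  rw [← op_unop q, ← op_mul, ← op_mul, Quaternion.coe_commutes]

lemma map_zero_of_add (A : V → V) (hadd : ∀ x y : V, A (x + y) = A x + A y) :
    A 0 = 0 := by
  have := hadd 0 0
  rw [add_zero] at this
  exact left_eq_add.mp this

lemma rq_bdd (A : V → V) (hA : IsBddRL A) (l : Quat) : IsBddRL (Rq A l) := by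
  obtain ⟨hadd, hsmul, C₀, hC₀⟩ := hA
  refine ⟨?_, ?_, ?_⟩
  · intro x y
    simp only [Rq, hadd, smul_add]
    abel
  · intro q x
    simp only [Rq, hsmul, op_real_smul_comm, smul_sub, smul_add]
  · set D : ℝ := max C₀ 0 with hD
    have hD0 : 0 ≤ D := le_max_right _ _
    have hDb : ∀ x : V, ‖A x‖ ≤ D * ‖x‖ := fun x =>
      (hC₀ x).trans (mul_le_mul_of_nonneg_right (le_max_left _ _) (norm_nonneg x))
    refine ⟨D * D + ‖((2 * l.re : ℝ) : Quat)‖ * D + ‖((‖l‖ ^ 2 : ℝ) : Quat)‖, fun x => ?_⟩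
    have h1 : ‖Rq A l x‖ ≤ ‖A (A x) - op ((2 * l.re : ℝ) : Quat) • A x‖
        + ‖op ((‖l‖ ^ 2 : ℝ) : Quat) • x‖ := norm_add_le _ _
    have h2 : ‖A (A x) - op ((2 * l.re : ℝ) : Quat) • A x‖ ≤ ‖A (A x)‖
        + ‖op ((2 * l.re : ℝ) : Quat) • A x‖ := norm_sub_le _ _
    rw [norm_op_smul] at h1 h2
    have h3 : ‖A (A x)‖ ≤ D * (D * ‖x‖) :=
      (hDb (A x)).trans (mul_le_mul_of_nonneg_left (hDb x) hD0)
    have h4 : ‖((2 * l.re : ℝ) : Quat)‖ * ‖A x‖ ≤ ‖((2 * l.re : ℝ) : Quat)‖ * (D * ‖x‖) :=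
      mul_le_mul_of_nonneg_left (hDb x) (norm_nonneg _)
    nlinarith [norm_nonneg x]

lemma inn_A_lower (A : V → V) (hA : IsBddRL A) (hpos : IsPos A) (φ : V) :
    mA A * ‖φ‖ ^ 2 ≤ (inn (A φ) φ).re ∧ (inn (A φ) φ).re ≤ MA A * ‖φ‖ ^ 2 := by
  obtain ⟨hadd, hsmul, C₀, hC₀⟩ := hA
  set S := { r : ℝ | ∃ φ : V, ‖φ‖ = 1 ∧ r = (inn (A φ) φ).re } with hS
  have hbdd_below : BddBelow S := by
    refine ⟨0, fun r hr => ?_⟩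
    obtain ⟨ψ, hψ, rfl⟩ := hr
    obtain ⟨r', hr', heq⟩ := hpos ψ
    rw [heq, Quaternion.re_coe]
    exact hr'
  have hbdd_above : BddAbove S := by
    refine ⟨C₀, fun r hr => ?_⟩
    obtain ⟨ψ, hψ, rfl⟩ := hr
    have h1 : (inn (A ψ) ψ).re ≤ ‖A ψ‖ * ‖ψ‖ := re_inn_le _ _
    have h2 : ‖A ψ‖ ≤ C₀ * ‖ψ‖ := hC₀ ψ
    rw [hψ] at h1 h2
    simpa using h1.trans (by simpa using h2)
  rcases eq_or_ne φ 0 with rfl | hφ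
  · rw [map_zero_of_add A hadd, inn_zero_left]
    simp [Quaternion.re_zero]
  · have hφ0 : 0 < ‖φ‖ := norm_pos_iff.mpr hφ
    set s : ℝ := ‖φ‖⁻¹ with hs
    have hs0 : 0 < s := by positivity
    have hs1 : s * ‖φ‖ = 1 := inv_mul_cancel₀ hφ0.ne'
    set ψ : V := op ((s : ℝ) : Quat) • φ with hψdef
    have hψ1 : ‖ψ‖ = 1 := by
      rw [hψdef, norm_op_smul, Quaternion.norm_coe, Real.norm_eq_abs, abs_of_pos hs0, hs1]
    have hre : (inn (A ψ) ψ).re = s ^ 2 * (inn (A φ) φ).re := by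
      rw [hψdef, hsmul, inn_smul_left, smul_right, Quaternion.star_coe]
      rw [coe_mul_re, mul_coe_re]
      ring
    have hmem : (inn (A ψ) ψ).re ∈ S := ⟨ψ, hψ1, rfl⟩
    have hlow : mA A ≤ (inn (A ψ) ψ).re := csInf_le hbdd_below hmem
    have hhigh : (inn (A ψ) ψ).re ≤ MA A := le_csSup hbdd_above hmem
    rw [hre] at hlow hhigh
    have hss : s ^ 2 * ‖φ‖ ^ 2 = 1 := by
      rw [← mul_pow, hs1, one_pow]
    constructor
    · have h := mul_le_mul_of_nonneg_right hlow (sq_nonneg ‖φ‖)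
      calc mA A * ‖φ‖ ^ 2 ≤ s ^ 2 * (inn (A φ) φ).re * ‖φ‖ ^ 2 := h
        _ = (inn (A φ) φ).re * (s ^ 2 * ‖φ‖ ^ 2) := by ring
        _ = (inn (A φ) φ).re := by rw [hss, mul_one]
    · have h := mul_le_mul_of_nonneg_right hhigh (sq_nonneg ‖φ‖)
      calc (inn (A φ) φ).re = (inn (A φ) φ).re * (s ^ 2 * ‖φ‖ ^ 2) := by
            rw [hss, mul_one]
        _ = s ^ 2 * (inn (A φ) φ).re * ‖φ‖ ^ 2 := by ring
        _ ≤ MA A * ‖φ‖ ^ 2 := h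

lemma rq_re (A : V → V) (hsa : IsSA A) (l : Quat) (φ : V) :
    (inn (Rq A l φ) φ).re
      = ‖A φ - op ((l.re : ℝ) : Quat) • φ‖ ^ 2 + (‖l‖ ^ 2 - l.re ^ 2) * ‖φ‖ ^ 2 := by
  have hAA : inn (A (A φ)) φ = inn (A φ) (A φ) := hsa (A φ) φ
  have h1 : inn (Rq A l φ) φ
      = inn (A (A φ)) φ - ((2 * l.re : ℝ) : Quat) * inn (A φ) φ
        + ((‖l‖ ^ 2 : ℝ) : Quat) * inn φ φ := by
    rw [Rq, inn_add_left, inn_sub_left, inn_smul_left, inn_smul_left,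
      Quaternion.star_coe, Quaternion.star_coe]
  have h2 : (inn (Rq A l φ) φ).re
      = ‖A φ‖ ^ 2 - 2 * l.re * (inn (A φ) φ).re + ‖l‖ ^ 2 * ‖φ‖ ^ 2 := by
    rw [h1]
    simp only [Quaternion.re_add, Quaternion.re_sub, coe_mul_re]
    rw [hAA, norm_sq_re, norm_sq_re]
    try ring
  have h3 : ‖A φ - op ((l.re : ℝ) : Quat) • φ‖ ^ 2
      = ‖A φ‖ ^ 2 - 2 * l.re * (inn (A φ) φ).re + l.re ^ 2 * ‖φ‖ ^ 2 := by
    rw [norm_sub_sq']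
    have hx : (inn (A φ) (op ((l.re : ℝ) : Quat) • φ)).re = (inn (A φ) φ).re * l.re := by
      rw [smul_right, mul_coe_re]
    rw [hx, norm_op_smul, Quaternion.norm_coe, Real.norm_eq_abs, mul_pow, sq_abs]
    ring
  rw [h2, h3]
  ring

lemma normsq_ge_re (l : Quat) : l.re ^ 2 ≤ ‖l‖ ^ 2 := by
  have h : ‖l‖ ^ 2 = Quaternion.normSq l := by
    rw [Quaternion.normSq_eq_norm_mul_self, sq]
  rw [h, Quaternion.normSq_def']
  nlinarith [sq_nonneg l.imI, sq_nonneg l.imJ, sq_nonneg l.imK]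

lemma real_of_normsq_eq (l : Quat) (h : ‖l‖ ^ 2 = l.re ^ 2) : l = ((l.re : ℝ) : Quat) := by
  have h2 : ‖l‖ ^ 2 = Quaternion.normSq l := by
    rw [Quaternion.normSq_eq_norm_mul_self, sq]
  rw [h2, Quaternion.normSq_def'] at h
  have hI : l.imI = 0 := by nlinarith [sq_nonneg l.imI, sq_nonneg l.imJ, sq_nonneg l.imK]
  have hJ : l.imJ = 0 := by nlinarith [sq_nonneg l.imI, sq_nonneg l.imJ, sq_nonneg l.imK]
  have hK : l.imK = 0 := by nlinarith [sq_nonneg l.imI, sq_nonneg l.imJ, sq_nonneg l.imK]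
  ext <;> simp [hI, hJ, hK]


/-- The S-spectrum of a positive bounded self-adjoint operator lies in [m(A), M(A)]. -/
theorem stmt10 [Nontrivial V] (A : V → V) (hA : IsBddRL A) (hsa : IsSA A) (hpos : IsPos A) :
    sspec A ⊆ (fun r : ℝ => (r : Quat)) '' Set.Icc (mA A) (MA A) := by
  intro l hl
  by_contra hnot
  refine (hl ?_).elim
  have hbdd := rq_bdd A hA l
  have hd := normsq_ge_re l
  rcases lt_or_eq_of_le hd with hdlt | hdeq
  · refine sInv_of_coercive (Rq A l) hbdd (‖l‖ ^ 2 - l.re ^ 2) (by linarith) (fun φ => ?_)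
    rw [rq_re A hsa l φ]
    nlinarith [sq_nonneg ‖A φ - op ((l.re : ℝ) : Quat) • φ‖]
  · have hlre : l = ((l.re : ℝ) : Quat) := real_of_normsq_eq l hdeq.symm
    have hnotIcc : l.re ∉ Set.Icc (mA A) (MA A) := fun hmem => hnot ⟨l.re, hmem, hlre.symm⟩
    rw [Set.mem_Icc, not_and_or] at hnotIcc
    obtain ⟨δ, hδ0, hgap⟩ : ∃ δ : ℝ, 0 < δ ∧
        ∀ φ : V, δ * ‖φ‖ ^ 2 ≤ ‖A φ - op ((l.re : ℝ) : Quat) • φ‖ * ‖φ‖ := by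
      rcases hnotIcc with hlow | hhigh
      · push_neg at hlow
        refine ⟨mA A - l.re, by linarith, fun φ => ?_⟩
        have hb := (inn_A_lower A hA hpos φ).1
        have hre : (inn (A φ - op ((l.re : ℝ) : Quat) • φ) φ).re
            = (inn (A φ) φ).re - l.re * ‖φ‖ ^ 2 := by
          rw [inn_sub_left, inn_smul_left, Quaternion.star_coe, norm_sq]
          simp only [Quaternion.re_sub, coe_mul_re, Quaternion.re_coe]
        have hcs := re_inn_le (A φ - op ((l.re : ℝ) : Quat) • φ) φ
        rw [hre] at hcs
        linarith
      · push_neg at hhigh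
        refine ⟨l.re - MA A, by linarith, fun φ => ?_⟩
        have hb := (inn_A_lower A hA hpos φ).2
        have hre : (inn (op ((l.re : ℝ) : Quat) • φ - A φ) φ).re
            = l.re * ‖φ‖ ^ 2 - (inn (A φ) φ).re := by
          rw [inn_sub_left, inn_smul_left, Quaternion.star_coe, norm_sq]
          simp only [Quaternion.re_sub, coe_mul_re, Quaternion.re_coe]
        have hcs := re_inn_le (op ((l.re : ℝ) : Quat) • φ - A φ) φ
        rw [hre, norm_sub_rev] at hcs
        linarith
    refine sInv_of_coercive (Rq A l) hbdd (δ ^ 2) (by positivity) (fun φ => ?_)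
    rw [rq_re A hsa l φ, ← hdeq]
    rcases eq_or_ne φ 0 with rfl | hφ
    · simp only [norm_zero]
      nlinarith [sq_nonneg ‖A (0 : V) - op ((l.re : ℝ) : Quat) • (0 : V)‖]
    · have hφ0 : 0 < ‖φ‖ := norm_pos_iff.mpr hφ
      have hgapφ := hgap φ
      have h6 : δ * ‖φ‖ ≤ ‖A φ - op ((l.re : ℝ) : Quat) • φ‖ := by
        have h7 : δ * ‖φ‖ * ‖φ‖ ≤ ‖A φ - op ((l.re : ℝ) : Quat) • φ‖ * ‖φ‖ := by
          nlinarith [hgapφ]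
        exact le_of_mul_le_mul_right h7 hφ0
      nlinarith [mul_self_le_mul_self (by positivity : (0:ℝ) ≤ δ * ‖φ‖) h6]
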